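/- For k ≥ 1 and t ∈ (0,1), let μ_t = (1 − t^k + t^{k+1}) δ_{−t^k} + (t^k − t^{k+1}) δ_{1−t^k}. Then for each t, μ_t has negative mean; the family (μ_t)_{t∈(0,1)} is non-decreasing in the WDS order; and it is not non-increasing in the usual stochastic order (indeed t ↦ μ_t([0,∞)) = t^k − t^{k+1} is not non-increasing). -/

import Mathlib

open MeasureTheory Set Filter

noncomputable def meanM (μ : Measure ℝ) : ℝ := ∫ y, y ∂μ

noncomputable def rSupE (μ : Measure ℝ) : EReal :=
  sInf ((fun z : ℝ => (z : EReal)) '' {z : ℝ | μ (Ici z) = 0})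

noncomputable def psiWds (μ : Measure ℝ) (x : ℝ) : EReal :=
  if (x : EReal) < rSupE μ then
    ((((∫ y in Ici x, y ∂μ) - meanM μ) / (μ (Ici x)).toReal : ℝ) : EReal)
  else ⊤

noncomputable def Kfun (μ : Measure ℝ) (x : ℝ) : ℝ :=
  (∫ y in Ici x, (y - x) ∂μ) - meanM μ

noncomputable def muD (k : ℕ) (t : ℝ) : Measure ℝ :=
  ENNReal.ofReal (1 - t ^ k + t ^ (k + 1)) • Measure.dirac (-(t ^ k))
    + ENNReal.ofReal (t ^ k - t ^ (k + 1)) • Measure.dirac (1 - t ^ k)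

/- ### auxiliary lemmas -/

lemma integrable_dirac'' {f : ℝ → ℝ} (hf : Measurable f) (a : ℝ) :
    Integrable f (Measure.dirac a) := by
  refine ⟨hf.aestronglyMeasurable, ?_⟩
  have : ∫⁻ y, (‖f y‖₊ : ENNReal) ∂(Measure.dirac a) = (‖f a‖₊ : ENNReal) :=
    lintegral_dirac' a (by measurability)
  simp only [HasFiniteIntegral, this]
  rw [lintegral_dirac]; exact enorm_lt_top

lemma muD_Ici_one {k : ℕ} {t x : ℝ} (hx : x ≤ -(t ^ k)) :
    muD k t (Ici x)
      = ENNReal.ofReal (1 - t ^ k + t ^ (k + 1)) + ENNReal.ofReal (t ^ k - t ^ (k + 1)) := by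
  have h1 : -(t ^ k) ∈ Ici x := hx
  have h2 : (1 - t ^ k) ∈ Ici x := by
    simp only [mem_Ici] at *; linarith
  simp [muD, Measure.dirac_apply' _ measurableSet_Ici, indicator_of_mem, h1, h2]

lemma muD_Ici_mid {k : ℕ} {t x : ℝ} (hx1 : -(t ^ k) < x) (hx2 : x ≤ 1 - t ^ k) :
    muD k t (Ici x) = ENNReal.ofReal (t ^ k - t ^ (k + 1)) := by
  have h1 : -(t ^ k) ∉ Ici x := by simp only [mem_Ici, not_le]; exact hx1
  have h2 : (1 - t ^ k) ∈ Ici x := hx2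
  simp [muD, Measure.dirac_apply' _ measurableSet_Ici, indicator_of_mem,
    indicator_of_notMem, h1, h2]

lemma muD_Ici_zero {k : ℕ} {t x : ℝ} (hx : 1 - t ^ k < x) :
    muD k t (Ici x) = 0 := by
  have h2 : (1 - t ^ k) ∉ Ici x := by simp only [mem_Ici, not_le]; exact hx
  have h1 : -(t ^ k) ∉ Ici x := by
    simp only [mem_Ici, not_le]; nlinarith [sq_nonneg (t ^ k)]
  simp [muD, Measure.dirac_apply' _ measurableSet_Ici, indicator_of_notMem, h1, h2]

lemma meanM_muD {k : ℕ} {t : ℝ} (ha : 0 ≤ 1 - t ^ k + t ^ (k + 1))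
    (hb : 0 ≤ t ^ k - t ^ (k + 1)) : meanM (muD k t) = -(t ^ (k + 1)) := by
  have h1 : Integrable (fun y : ℝ => y)
      ((ENNReal.ofReal (1 - t ^ k + t ^ (k + 1))) • Measure.dirac (-(t ^ k))) :=
    (integrable_dirac'' measurable_id _).smul_measure ENNReal.ofReal_ne_top
  have h2 : Integrable (fun y : ℝ => y)
      ((ENNReal.ofReal (t ^ k - t ^ (k + 1))) • Measure.dirac (1 - t ^ k)) :=
    (integrable_dirac'' measurable_id _).smul_measure ENNReal.ofReal_ne_top
  rw [meanM, muD, integral_add_measure h1 h2, integral_smul_measure, integral_smul_measure,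
    integral_dirac, integral_dirac, ENNReal.toReal_ofReal ha, ENNReal.toReal_ofReal hb]
  simp only [smul_eq_mul]
  ring

lemma setIntegral_muD {k : ℕ} {t : ℝ} (x : ℝ) (ha : 0 ≤ 1 - t ^ k + t ^ (k + 1))
    (hb : 0 ≤ t ^ k - t ^ (k + 1)) :
    ∫ y in Ici x, y ∂(muD k t)
      = (1 - t ^ k + t ^ (k + 1)) * (if -(t ^ k) ∈ Ici x then -(t ^ k) else 0)
        + (t ^ k - t ^ (k + 1)) * (if (1 - t ^ k) ∈ Ici x then (1 - t ^ k) else 0) := by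
  have h1 : Integrable (fun y : ℝ => y) ((Measure.dirac (-(t ^ k))).restrict (Ici x)) :=
    (integrable_dirac'' measurable_id _).restrict
  have h2 : Integrable (fun y : ℝ => y) ((Measure.dirac (1 - t ^ k)).restrict (Ici x)) :=
    (integrable_dirac'' measurable_id _).restrict
  rw [muD, Measure.restrict_add, Measure.restrict_smul, Measure.restrict_smul,
    integral_add_measure (h1.smul_measure ENNReal.ofReal_ne_top)
      (h2.smul_measure ENNReal.ofReal_ne_top),
    integral_smul_measure, integral_smul_measure, setIntegral_dirac, setIntegral_dirac,
    ENNReal.toReal_ofReal ha, ENNReal.toReal_ofReal hb, smul_eq_mul, smul_eq_mul]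

lemma ab_facts {k : ℕ} {t : ℝ} (hk : 1 ≤ k) (ht : t ∈ Ioo (0 : ℝ) 1) :
    0 < t ^ k - t ^ (k + 1) ∧ 0 < 1 - t ^ k + t ^ (k + 1) ∧ t ^ k < 1 := by
  obtain ⟨ht0, ht1⟩ := ht
  have h1 : t ^ k < 1 := pow_lt_one₀ ht0.le ht1 (by omega)
  have h2 : t ^ (k + 1) < t ^ k := pow_lt_pow_right_of_lt_one₀ ht0 ht1 (by omega)
  have h3 : 0 < t ^ (k + 1) := pow_pos ht0 _
  exact ⟨by linarith, by linarith, h1⟩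

lemma rSupE_muD {k : ℕ} {t : ℝ} (hk : 1 ≤ k) (ht : t ∈ Ioo (0 : ℝ) 1) :
    rSupE (muD k t) = ((1 - t ^ k : ℝ) : EReal) := by
  obtain ⟨hb, ha, h1⟩ := ab_facts hk ht
  have hset : {z : ℝ | muD k t (Ici z) = 0} = Ioi (1 - t ^ k) := by
    ext z
    simp only [mem_setOf_eq, mem_Ioi]
    constructor
    · intro h
      by_contra hz
      push_neg at hz
      rcases le_or_gt z (-(t ^ k)) with h' | h'
      · rw [muD_Ici_one h'] at h
        rcases (add_eq_zero).mp h with ⟨_, h0⟩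
        rw [ENNReal.ofReal_eq_zero] at h0
        linarith
      · rw [muD_Ici_mid h' hz] at h
        rw [ENNReal.ofReal_eq_zero] at h
        linarith
    · intro h
      exact muD_Ici_zero h
  rw [rSupE, hset]
  apply le_antisymm
  · apply le_of_forall_gt_imp_ge_of_dense
    intro w hw
    induction w using EReal.rec with
    | bot => exact absurd hw (by simp)
    | coe z =>
        exact sInf_le ⟨z, EReal.coe_lt_coe_iff.mp hw, rfl⟩
    | top => exact le_top
  · apply le_sInf
    rintro w ⟨z, hz, rfl⟩
    show ((1 - t ^ k : ℝ) : EReal) ≤ ((z : ℝ) : EReal)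
    exact_mod_cast le_of_lt hz

lemma psi_zero {k : ℕ} {t x : ℝ} (hk : 1 ≤ k) (ht : t ∈ Ioo (0 : ℝ) 1)
    (hx : x ≤ -(t ^ k)) : psiWds (muD k t) x = 0 := by
  obtain ⟨hb, ha, h1⟩ := ab_facts hk ht
  have h3 : 0 < t ^ (k + 1) := pow_pos ht.1 _
  have h4 : 0 < t ^ k := pow_pos ht.1 _
  have hlt : x < 1 - t ^ k := by nlinarith
  rw [psiWds, if_pos (by rw [rSupE_muD hk ht]; exact_mod_cast hlt)]
  have hmem1 : -(t ^ k) ∈ Ici x := hx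
  have hmem2 : (1 - t ^ k) ∈ Ici x := by simp only [mem_Ici]; linarith
  rw [setIntegral_muD x ha.le hb.le, meanM_muD ha.le hb.le, if_pos hmem1, if_pos hmem2]
  have heq : (1 - t ^ k + t ^ (k + 1)) * -(t ^ k) + (t ^ k - t ^ (k + 1)) * (1 - t ^ k)
      - -(t ^ (k + 1)) = 0 := by ring
  rw [heq, zero_div]
  exact EReal.coe_zero

lemma psi_mid {k : ℕ} {t x : ℝ} (hk : 1 ≤ k) (ht : t ∈ Ioo (0 : ℝ) 1)
    (hx1 : -(t ^ k) < x) (hx2 : x < 1 - t ^ k) :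
    psiWds (muD k t) x = ((1 - t ^ k + t / (1 - t) : ℝ) : EReal) := by
  obtain ⟨hb, ha, h1⟩ := ab_facts hk ht
  rw [psiWds, if_pos (by rw [rSupE_muD hk ht]; exact_mod_cast hx2)]
  have hmem1 : -(t ^ k) ∉ Ici x := by simp only [mem_Ici, not_le]; exact hx1
  have hmem2 : (1 - t ^ k) ∈ Ici x := hx2.le
  rw [setIntegral_muD x ha.le hb.le, meanM_muD ha.le hb.le, if_neg hmem1, if_pos hmem2,
    muD_Ici_mid hx1 hx2.le, ENNReal.toReal_ofReal hb.le]
  norm_cast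
  have ht1 : (1 : ℝ) - t ≠ 0 := by have := ht.2; intro h; linarith
  have hbne : t ^ k - t ^ (k + 1) ≠ 0 := ne_of_gt hb
  field_simp
  ring

lemma psi_top {k : ℕ} {t x : ℝ} (hk : 1 ≤ k) (ht : t ∈ Ioo (0 : ℝ) 1)
    (hx : 1 - t ^ k ≤ x) : psiWds (muD k t) x = ⊤ := by
  rw [psiWds, if_neg]
  rw [rSupE_muD hk ht]
  exact not_lt.mpr (by exact_mod_cast hx)

lemma key_ineq {k : ℕ} (hk : 1 ≤ k) {s t : ℝ} (hs : s ∈ Ioo (0 : ℝ) 1)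
    (ht : t ∈ Ioo (0 : ℝ) 1) (hst : s ≤ t) :
    1 - s ^ k + s / (1 - s) ≤ 1 - t ^ k + t / (1 - t) := by
  have hA : 0 < 1 - s := by linarith [hs.2]
  have hB : 0 < 1 - t := by linarith [ht.2]
  have hs0 : 0 < s := hs.1
  have ht0 : 0 < t := ht.1
  set S : ℝ := ∑ i ∈ Finset.range k, t ^ i * s ^ (k - 1 - i) with hS
  have hsum : t ^ k - s ^ k = S * (t - s) := (geom_sum₂_mul t s k).symm
  have hSnn : 0 ≤ S := Finset.sum_nonneg fun i _ => by positivity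
  have hbound : S ≤ (k : ℝ) * t ^ (k - 1) := by
    calc S ≤ ∑ _i ∈ Finset.range k, t ^ (k - 1) := by
            apply Finset.sum_le_sum
            intro i hi
            have hik : i < k := Finset.mem_range.mp hi
            have hmul : t ^ i * s ^ (k - 1 - i) ≤ t ^ i * t ^ (k - 1 - i) := by
              apply mul_le_mul_of_nonneg_left _ (by positivity)
              exact pow_le_pow_left₀ hs0.le hst _
            refine hmul.trans (le_of_eq ?_)
            rw [← pow_add]
            congr 1
            omega
      _ = (k : ℝ) * t ^ (k - 1) := by
            rw [Finset.sum_const, Finset.card_range, nsmul_eq_mul]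
  have hgeo : (1 - t) * (∑ i ∈ Finset.range k, t ^ i) = 1 - t ^ k := by
    linear_combination (-1 : ℝ) * geom_sum_mul t k
  have hkt : (k : ℝ) * t ^ (k - 1) ≤ ∑ i ∈ Finset.range k, t ^ i := by
    calc (k : ℝ) * t ^ (k - 1) = ∑ _i ∈ Finset.range k, t ^ (k - 1) := by
          rw [Finset.sum_const, Finset.card_range, nsmul_eq_mul]
      _ ≤ ∑ i ∈ Finset.range k, t ^ i := by
          apply Finset.sum_le_sum
          intro i hi
          have hik := Finset.mem_range.mp hi
          exact pow_le_pow_of_le_one ht0.le ht.2.le (by omega)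
  have e1 : S * (1 - t) ≤ 1 - t ^ k := by
    calc S * (1 - t) ≤ ((k : ℝ) * t ^ (k - 1)) * (1 - t) :=
          mul_le_mul_of_nonneg_right hbound hB.le
      _ ≤ (∑ i ∈ Finset.range k, t ^ i) * (1 - t) :=
          mul_le_mul_of_nonneg_right hkt hB.le
      _ = 1 - t ^ k := by linarith [hgeo]
  have e2 : S * (1 - t) * (1 - s) ≤ 1 := by
    have h01 : S * (1 - t) ≤ 1 := by nlinarith [pow_pos ht0 k]
    have h02 : 0 ≤ S * (1 - t) := mul_nonneg hSnn hB.le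
    nlinarith
  have hmain : (t ^ k - s ^ k) * ((1 - s) * (1 - t)) ≤ t - s := by
    have h3 : (t - s) * (S * (1 - t) * (1 - s)) ≤ (t - s) * 1 :=
      mul_le_mul_of_nonneg_left e2 (by linarith)
    rw [hsum]
    calc S * (t - s) * ((1 - s) * (1 - t)) = (t - s) * (S * (1 - t) * (1 - s)) := by ring
      _ ≤ (t - s) * 1 := h3
      _ = t - s := mul_one _
  have h2 : t / (1 - t) - s / (1 - s) = (t - s) / ((1 - s) * (1 - t)) := by
    field_simp
    ring
  have h3 : t ^ k - s ^ k ≤ (t - s) / ((1 - s) * (1 - t)) :=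
    (le_div_iff₀ (by positivity)).mpr hmain
  linarith [h3, h2.le, h2.ge]

theorem stmt15 (k : ℕ) (hk : 1 ≤ k) :
    (∀ t ∈ Ioo (0 : ℝ) 1, meanM (muD k t) < 0) ∧
    (∀ s ∈ Ioo (0 : ℝ) 1, ∀ t ∈ Ioo (0 : ℝ) 1, s ≤ t →
      ∀ x : ℝ, psiWds (muD k s) x ≤ psiWds (muD k t) x) ∧
    ¬ (∀ s ∈ Ioo (0 : ℝ) 1, ∀ t ∈ Ioo (0 : ℝ) 1, s ≤ t →
      ∀ x : ℝ, muD k t (Ici x) ≤ muD k s (Ici x)) := by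
  refine ⟨?_, ?_, ?_⟩
  · intro t ht
    obtain ⟨hb, ha, h1⟩ := ab_facts hk ht
    rw [meanM_muD ha.le hb.le]
    have : 0 < t ^ (k + 1) := pow_pos ht.1 _
    linarith
  · intro s hs t ht hst x
    obtain ⟨hbs, has, h1s⟩ := ab_facts hk hs
    obtain ⟨hbt, hat, h1t⟩ := ab_facts hk ht
    have hpk : s ^ k ≤ t ^ k := pow_le_pow_left₀ hs.1.le hst k
    rcases le_or_gt x (-(t ^ k)) with h1 | h1
    · rw [psi_zero hk ht h1, psi_zero hk hs (by linarith)]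
    · rcases le_or_gt (1 - t ^ k) x with h2 | h2
      · rw [psi_top hk ht h2]
        exact le_top
      · rw [psi_mid hk ht h1 h2]
        rcases le_or_gt x (-(s ^ k)) with h3 | h3
        · rw [psi_zero hk hs h3]
          have hc : (0 : ℝ) ≤ 1 - t ^ k + t / (1 - t) := by
            have hdiv := div_nonneg ht.1.le (by linarith [ht.2] : (0:ℝ) ≤ 1 - t)
            linarith
          exact_mod_cast hc
        · rw [psi_mid hk hs h3 (by linarith)]
          exact_mod_cast key_ineq hk hs ht hst
  · intro H
    have h4 : (1/4 : ℝ) ∈ Ioo (0 : ℝ) 1 := by norm_num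
    have h2 : (1/2 : ℝ) ∈ Ioo (0 : ℝ) 1 := by norm_num
    have hH := H (1/4) h4 (1/2) h2 (by norm_num) 0
    have hp2 : (0:ℝ) < (1/2 : ℝ) ^ k := pow_pos (by norm_num) _
    have hp4 : (0:ℝ) < (1/4 : ℝ) ^ k := pow_pos (by norm_num) _
    have hle2 : ((1/2 : ℝ)) ^ k ≤ 1 := pow_le_one₀ (by norm_num) (by norm_num)
    have hle4 : ((1/4 : ℝ)) ^ k ≤ 1 := pow_le_one₀ (by norm_num) (by norm_num)
    rw [muD_Ici_mid (by linarith) (by linarith),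
      muD_Ici_mid (by linarith) (by linarith)] at hH
    rw [ENNReal.ofReal_le_ofReal_iff (by
      have hd : ((1/4:ℝ)) ^ (k+1) ≤ (1/4:ℝ) ^ k :=
        pow_le_pow_of_le_one (by norm_num) (by norm_num) (by omega)
      linarith)] at hH
    have hu : ((1/2 : ℝ)) ^ k ≤ 1/2 := by
      calc ((1/2 : ℝ)) ^ k ≤ (1/2 : ℝ) ^ 1 :=
            pow_le_pow_of_le_one (by norm_num) (by norm_num) hk
        _ = 1/2 := pow_one _
    have h4eq : ((1/4 : ℝ)) ^ k = ((1/2 : ℝ) ^ k) ^ 2 := by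
      rw [← pow_mul, mul_comm, pow_mul]
      norm_num
    have hsucc2 : ((1/2 : ℝ)) ^ (k + 1) = (1/2 : ℝ) ^ k * (1/2) := pow_succ _ _
    have hsucc4 : ((1/4 : ℝ)) ^ (k + 1) = (1/4 : ℝ) ^ k * (1/4) := pow_succ _ _
    rw [hsucc2, hsucc4, h4eq] at hH
    set u := ((1/2 : ℝ)) ^ k
    nlinarith [hH, hp2, hu]
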